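/- Let z ∈ ℤ_{≥0}^{2d} with Σ_{i=1}^d z_i = Σ_{i=1}^d z_{d+i} = S and z_i + z_{d+i} ≤ S for all i ∈ [d]. Then z can be written as a nonnegative integer combination Σ_{i≠j} λ_{ij} e_{ij}, where e_{ij} ∈ ℤ^{2d} is the 0/1-vector with 1 in coordinates j and d+i. -/

import Mathlib

open Finset

/-- The 0/1-vector `e_{ij} ∈ ℤ_{≥0}^{2d}` with 1 in coordinates `j` and `d + i`
(0-based). -/
def evec (d : ℕ) (i j : Fin d) : Fin (2 * d) → ℕ := fun t =>
  (if (t : ℕ) = (j : ℕ) then 1 else 0) + (if (t : ℕ) = d + (i : ℕ) then 1 else 0)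

/-- bottom coordinate -/
def bo (d : ℕ) (i : Fin d) : Fin (2 * d) := ⟨(i : ℕ), Nat.lt_of_lt_of_le i.isLt (by omega)⟩

/-- top coordinate -/
def tp (d : ℕ) (i : Fin d) : Fin (2 * d) := ⟨d + (i : ℕ), Nat.lt_of_lt_of_le (Nat.add_lt_add_left i.isLt d) (by omega)⟩

lemma evec_bo (d : ℕ) (i j m : Fin d) :
    evec d i j (bo d m) = if m = j then 1 else 0 := by
  have hm := m.isLt
  show ((if (m : ℕ) = (j : ℕ) then 1 else 0) + (if (m : ℕ) = d + (i : ℕ) then 1 else 0)) = if m = j then 1 else 0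
  rw [if_neg (by omega : ¬ ((m : ℕ) = d + (i : ℕ)))]
  by_cases h : m = j
  · subst h; simp
  · rw [if_neg (fun hc => h (Fin.ext hc)), if_neg h]

lemma evec_tp (d : ℕ) (i j m : Fin d) :
    evec d i j (tp d m) = if m = i then 1 else 0 := by
  have hj := j.isLt
  show ((if d + (m : ℕ) = (j : ℕ) then 1 else 0) + (if d + (m : ℕ) = d + (i : ℕ) then 1 else 0)) = if m = i then 1 else 0
  rw [if_neg (by omega : ¬ (d + (m : ℕ) = (j : ℕ)))]
  by_cases h : m = i
  · subst h; simp
  · rw [if_neg (fun hc => h (Fin.ext (by omega))), if_neg h]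

lemma bo_or_tp (d : ℕ) (t : Fin (2 * d)) :
    (∃ m : Fin d, t = bo d m) ∨ (∃ m : Fin d, t = tp d m) := by
  have ht := t.isLt
  by_cases h : (t : ℕ) < d
  · exact Or.inl ⟨⟨(t : ℕ), h⟩, by simp [bo, Fin.ext_iff]⟩
  · exact Or.inr ⟨⟨(t : ℕ) - d, by omega⟩, by simp [tp, Fin.ext_iff]; omega⟩

/-- Choice of a good pair for the inductive step. -/
lemma exists_pair (d S : ℕ) (z : Fin (2 * d) → ℕ)
    (h1 : ∑ i : Fin d, z (bo d i) = S + 1)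
    (h2 : ∑ i : Fin d, z (tp d i) = S + 1)
    (h3 : ∀ i : Fin d, z (bo d i) + z (tp d i) ≤ S + 1) :
    ∃ i j : Fin d, i ≠ j ∧ 1 ≤ z (bo d j) ∧ 1 ≤ z (tp d i) ∧
      ∀ k : Fin d, k ≠ i → k ≠ j → z (bo d k) + z (tp d k) ≤ S := by
  by_cases hA : ∃ k l : Fin d, k ≠ l ∧ z (bo d k) + z (tp d k) = S + 1 ∧
      z (bo d l) + z (tp d l) = S + 1
  · obtain ⟨k, l, hkl, hk, hl⟩ := hA
    have hsb : z (bo d k) + z (bo d l) ≤ S + 1 := by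
      have h : ∑ n ∈ ({k, l} : Finset (Fin d)), z (bo d n) ≤ ∑ n : Fin d, z (bo d n) :=
        Finset.sum_le_sum_of_subset (Finset.subset_univ _)
      rw [Finset.sum_pair hkl] at h
      omega
    have hst : z (tp d k) + z (tp d l) ≤ S + 1 := by
      have h : ∑ n ∈ ({k, l} : Finset (Fin d)), z (tp d n) ≤ ∑ n : Fin d, z (tp d n) :=
        Finset.sum_le_sum_of_subset (Finset.subset_univ _)
      rw [Finset.sum_pair hkl] at h
      omega
    have heqb : z (bo d k) + z (bo d l) = S + 1 := by omega
    have heqt : z (tp d k) + z (tp d l) = S + 1 := by omega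
    have hzero : ∀ m : Fin d, m ≠ k → m ≠ l → z (bo d m) + z (tp d m) = 0 := by
      intro m hmk hml
      have hmem : m ∉ ({k, l} : Finset (Fin d)) := by simp [hmk, hml]
      have hb : ∑ n ∈ insert m ({k, l} : Finset (Fin d)), z (bo d n) ≤
          ∑ n : Fin d, z (bo d n) := Finset.sum_le_sum_of_subset (Finset.subset_univ _)
      have ht : ∑ n ∈ insert m ({k, l} : Finset (Fin d)), z (tp d n) ≤
          ∑ n : Fin d, z (tp d n) := Finset.sum_le_sum_of_subset (Finset.subset_univ _)
      rw [Finset.sum_insert hmem, Finset.sum_pair hkl] at hb ht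
      omega
    by_cases hgood : 1 ≤ z (tp d k) ∧ 1 ≤ z (bo d l)
    · exact ⟨k, l, hkl, hgood.2, hgood.1, fun m hmk hml => by have := hzero m hmk hml; omega⟩
    · have hcase : z (tp d k) = 0 ∨ z (bo d l) = 0 := by
        by_contra hc
        push_neg at hc
        exact hgood ⟨by omega, by omega⟩
      rcases hcase with h | h
      · exact ⟨l, k, hkl.symm, by omega, by omega,
          fun m hml hmk => by have := hzero m hmk hml; omega⟩
      · exact ⟨l, k, hkl.symm, by omega, by omega,
          fun m hml hmk => by have := hzero m hmk hml; omega⟩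
  · push_neg at hA
    by_cases hB : ∃ k : Fin d, z (bo d k) + z (tp d k) = S + 1
    · obtain ⟨k, hk⟩ := hB
      have huniq : ∀ m : Fin d, m ≠ k → z (bo d m) + z (tp d m) ≤ S := by
        intro m hmk
        have := hA m k hmk
        have := h3 m
        omega
      by_cases hzk : 1 ≤ z (bo d k)
      · have herase : z (tp d k) + ∑ m ∈ univ.erase k, z (tp d m) = S + 1 :=
          (Finset.add_sum_erase univ (fun m => z (tp d m)) (Finset.mem_univ k)).trans h2
        have hpos : ∑ m ∈ univ.erase k, z (tp d m) ≠ 0 := by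
          have := h3 k; omega
        obtain ⟨i, hi, hine⟩ := Finset.exists_ne_zero_of_sum_ne_zero hpos
        have hik : i ≠ k := (Finset.mem_erase.mp hi).1
        exact ⟨i, k, hik, hzk, by omega, fun m hmi hmk => huniq m hmk⟩
      · have hzt : 1 ≤ z (tp d k) := by omega
        have herase : z (bo d k) + ∑ m ∈ univ.erase k, z (bo d m) = S + 1 :=
          (Finset.add_sum_erase univ (fun m => z (bo d m)) (Finset.mem_univ k)).trans h1
        have hpos : ∑ m ∈ univ.erase k, z (bo d m) ≠ 0 := by omega
        obtain ⟨j, hj, hjne⟩ := Finset.exists_ne_zero_of_sum_ne_zero hpos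
        have hjk : j ≠ k := (Finset.mem_erase.mp hj).1
        exact ⟨k, j, hjk.symm, by omega, hzt, fun m hmk hmj => huniq m hmk⟩
    · push_neg at hB
      have hall : ∀ m : Fin d, z (bo d m) + z (tp d m) ≤ S := by
        intro m; have := h3 m; have := hB m; omega
      have hpos : ∑ m : Fin d, z (bo d m) ≠ 0 := by omega
      obtain ⟨j, _, hjne⟩ := Finset.exists_ne_zero_of_sum_ne_zero hpos
      have herase : z (tp d j) + ∑ m ∈ univ.erase j, z (tp d m) = S + 1 :=
        (Finset.add_sum_erase univ (fun m => z (tp d m)) (Finset.mem_univ j)).trans h2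
      have hpost : ∑ m ∈ univ.erase j, z (tp d m) ≠ 0 := by
        have := hall j; omega
      obtain ⟨i, hi, hine⟩ := Finset.exists_ne_zero_of_sum_ne_zero hpost
      have hij : i ≠ j := (Finset.mem_erase.mp hi).1
      exact ⟨i, j, hij, by omega, by omega, fun m _ _ => hall m⟩

lemma key (d : ℕ) (S : ℕ) (z : Fin (2 * d) → ℕ)
    (h1 : ∑ i : Fin d, z (bo d i) = S)
    (h2 : ∑ i : Fin d, z (tp d i) = S)
    (h3 : ∀ i : Fin d, z (bo d i) + z (tp d i) ≤ S) :
    ∃ lam : Fin d → Fin d → ℕ, (∀ i, lam i i = 0) ∧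
      ∀ t, z t = ∑ i, ∑ j, lam i j * evec d i j t := by
  induction S generalizing z with
  | zero =>
      refine ⟨fun _ _ => 0, fun _ => rfl, fun t => ?_⟩
      have hz : z t = 0 := by
        rcases bo_or_tp d t with ⟨m, rfl⟩ | ⟨m, rfl⟩
        · exact Finset.sum_eq_zero_iff.mp h1 m (Finset.mem_univ m)
        · exact Finset.sum_eq_zero_iff.mp h2 m (Finset.mem_univ m)
      simp [hz]
  | succ S ih =>
      obtain ⟨i, j, hij, hzj, hzi, hrest⟩ := exists_pair d S z h1 h2 h3
      set z' : Fin (2 * d) → ℕ := fun t => z t - evec d i j t with hz'def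
      have hz'bo : ∀ m, z' (bo d m) = z (bo d m) - (if m = j then 1 else 0) := by
        intro m; simp [hz'def, evec_bo]
      have hz'tp : ∀ m, z' (tp d m) = z (tp d m) - (if m = i then 1 else 0) := by
        intro m; simp [hz'def, evec_tp]
      have h1' : ∑ m : Fin d, z' (bo d m) = S := by
        have e1 : z (bo d j) + ∑ m ∈ univ.erase j, z (bo d m) = S + 1 :=
          (Finset.add_sum_erase univ (fun m => z (bo d m)) (Finset.mem_univ j)).trans h1
        have e2 : z' (bo d j) + ∑ m ∈ univ.erase j, z' (bo d m) =
            ∑ m : Fin d, z' (bo d m) :=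
          Finset.add_sum_erase univ (fun m => z' (bo d m)) (Finset.mem_univ j)
        have e3 : ∑ m ∈ univ.erase j, z' (bo d m) = ∑ m ∈ univ.erase j, z (bo d m) := by
          apply Finset.sum_congr rfl
          intro m hm
          rw [hz'bo, if_neg (Finset.mem_erase.mp hm).1, Nat.sub_zero]
        have e4 : z' (bo d j) = z (bo d j) - 1 := by rw [hz'bo, if_pos rfl]
        omega
      have h2' : ∑ m : Fin d, z' (tp d m) = S := by
        have e1 : z (tp d i) + ∑ m ∈ univ.erase i, z (tp d m) = S + 1 :=
          (Finset.add_sum_erase univ (fun m => z (tp d m)) (Finset.mem_univ i)).trans h2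
        have e2 : z' (tp d i) + ∑ m ∈ univ.erase i, z' (tp d m) =
            ∑ m : Fin d, z' (tp d m) :=
          Finset.add_sum_erase univ (fun m => z' (tp d m)) (Finset.mem_univ i)
        have e3 : ∑ m ∈ univ.erase i, z' (tp d m) = ∑ m ∈ univ.erase i, z (tp d m) := by
          apply Finset.sum_congr rfl
          intro m hm
          rw [hz'tp, if_neg (Finset.mem_erase.mp hm).1, Nat.sub_zero]
        have e4 : z' (tp d i) = z (tp d i) - 1 := by rw [hz'tp, if_pos rfl]
        omega
      have h3' : ∀ m : Fin d, z' (bo d m) + z' (tp d m) ≤ S := by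
        intro m
        rw [hz'bo, hz'tp]
        by_cases hmi : m = i
        · subst hmi
          rw [if_neg (by exact fun h => hij (h ▸ rfl)), if_pos rfl]
          have := h3 m; omega
        · by_cases hmj : m = j
          · subst hmj
            rw [if_pos rfl, if_neg hmi]
            have := h3 m; omega
          · rw [if_neg hmj, if_neg hmi]
            have := hrest m hmi hmj; omega
      obtain ⟨lam', hl0, hlsum⟩ := ih z' h1' h2' h3'
      refine ⟨fun a b => lam' a b + (if a = i then if b = j then 1 else 0 else 0),
        fun a => ?_, fun t => ?_⟩
      · show lam' a a + (if a = i then if a = j then 1 else 0 else 0) = 0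
        rw [hl0]
        by_cases ha : a = i
        · subst ha; rw [if_pos rfl, if_neg hij]
        · rw [if_neg ha]
      · show z t = ∑ a, ∑ b,
          (lam' a b + (if a = i then if b = j then 1 else 0 else 0)) * evec d a b t
        have hzle : evec d i j t ≤ z t := by
          rcases bo_or_tp d t with ⟨m, rfl⟩ | ⟨m, rfl⟩
          · rw [evec_bo]
            by_cases hm : m = j
            · subst hm; simpa using hzj
            · simp [hm]
          · rw [evec_tp]
            by_cases hm : m = i
            · subst hm; simpa using hzi
            · simp [hm]
        have hzt : z t = z' t + evec d i j t := by
          simp only [hz'def]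
          omega
        rw [hzt, hlsum t]
        have hsplit : ∑ a, ∑ b, (lam' a b + (if a = i then if b = j then 1 else 0 else 0))
            * evec d a b t
            = (∑ a, ∑ b, lam' a b * evec d a b t)
              + ∑ a, ∑ b, (if a = i then if b = j then 1 else 0 else 0) * evec d a b t := by
          rw [← Finset.sum_add_distrib]
          apply Finset.sum_congr rfl
          intro a _
          rw [← Finset.sum_add_distrib]
          apply Finset.sum_congr rfl
          intro b _
          ring
        rw [hsplit]
        congr 1
        rw [Finset.sum_eq_single i]
        · rw [Finset.sum_eq_single j]
          · simp
          · intro b _ hb; simp [hb]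
          · simp
        · intro a _ ha; simp [ha]
        · simp

/-- Let `z ∈ ℤ_{≥0}^{2d}` with `Σ_{i=1}^d z_i = Σ_{i=1}^d z_{d+i} = S` and
`z_i + z_{d+i} ≤ S` for all `i ∈ [d]`. Then `z` is a nonnegative integer combination
`Σ_{i ≠ j} lam_{ij} e_{ij}`. -/
theorem proper_matching (d : ℕ) (z : Fin (2 * d) → ℕ) (S : ℕ)
    (h1 : ∑ i : Fin d, z ⟨(i : ℕ), by have := i.isLt; omega⟩ = S)
    (h2 : ∑ i : Fin d, z ⟨d + (i : ℕ), by have := i.isLt; omega⟩ = S)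
    (h3 : ∀ i : Fin d,
      z ⟨(i : ℕ), by have := i.isLt; omega⟩ + z ⟨d + (i : ℕ), by have := i.isLt; omega⟩ ≤ S) :
    ∃ lam : Fin d → Fin d → ℕ, (∀ i, lam i i = 0) ∧
      z = fun t => ∑ i, ∑ j, lam i j * evec d i j t := by
  obtain ⟨lam, h0, hsum⟩ := key d S z h1 h2 h3
  exact ⟨lam, h0, funext hsum⟩
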